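/- Let {A_k : ℝ^m → ℝ^m, k ∈ ℤ} be a sequence of linear isomorphisms for which there is a constant N > 0 with ‖A_k‖ ≤ N and ‖A_k⁻¹‖ ≤ N for all k. Assume that for every bounded sequence {w_k ∈ ℝ^m, k ∈ ℤ} there exists a bounded sequence {v_k ∈ ℝ^m, k ∈ ℤ} such that v_{k+1} = A_k v_k + w_k for all k ∈ ℤ. Then B⁺(𝒜) + B⁻(𝒜) = ℝ^m, i.e. every vector of ℝ^m is the sum of a vector of B⁺(𝒜) and a vector of B⁻(𝒜). -/

import Mathlib

open Filter Topology

/-- Transition map `Φ(k,l)` for `k = l + n`, `n ≥ 0`: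
`Φ(l+n+1, l) = A_{l+n} ∘ Φ(l+n, l)`. -/
noncomputable def PhiPos {m : ℕ}
    (A : ℤ → (EuclideanSpace ℝ (Fin m) ≃L[ℝ] EuclideanSpace ℝ (Fin m))) (l : ℤ) :
    ℕ → (EuclideanSpace ℝ (Fin m) →L[ℝ] EuclideanSpace ℝ (Fin m))
  | 0 => 1
  | n + 1 =>
      ((A (l + n) : EuclideanSpace ℝ (Fin m) →L[ℝ] EuclideanSpace ℝ (Fin m))).comp
        (PhiPos A l n)

/-- Transition map `Φ(k,l)` for `l = k + n`, `n ≥ 0`: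
`Φ(k, k+n+1) = Φ(k, k+n) ∘ A_{k+n}⁻¹`. -/
noncomputable def PhiNeg {m : ℕ}
    (A : ℤ → (EuclideanSpace ℝ (Fin m) ≃L[ℝ] EuclideanSpace ℝ (Fin m))) (k : ℤ) :
    ℕ → (EuclideanSpace ℝ (Fin m) →L[ℝ] EuclideanSpace ℝ (Fin m))
  | 0 => 1
  | n + 1 =>
      (PhiNeg A k n).comp
        (((A (k + n)).symm : EuclideanSpace ℝ (Fin m) →L[ℝ] EuclideanSpace ℝ (Fin m)))

/-- The transition maps `Φ(k,l)`: `Φ(k,l) = A_{k-1} ∘ ⋯ ∘ A_l` for `l < k`,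
`Φ(k,k) = Id`, and `Φ(k,l) = A_k⁻¹ ∘ ⋯ ∘ A_{l-1}⁻¹` for `l > k`. -/
noncomputable def Phi {m : ℕ}
    (A : ℤ → (EuclideanSpace ℝ (Fin m) ≃L[ℝ] EuclideanSpace ℝ (Fin m))) (k l : ℤ) :
    EuclideanSpace ℝ (Fin m) →L[ℝ] EuclideanSpace ℝ (Fin m) :=
  if l ≤ k then PhiPos A l (k - l).toNat else PhiNeg A k (l - k).toNat

/-- `B⁺(𝒜) = {v : ‖Φ(k,0)v‖ → 0 as k → +∞}`. -/
def Bplus {m : ℕ}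
    (A : ℤ → (EuclideanSpace ℝ (Fin m) ≃L[ℝ] EuclideanSpace ℝ (Fin m))) :
    Set (EuclideanSpace ℝ (Fin m)) :=
  {v | Tendsto (fun k : ℤ => ‖Phi A k 0 v‖) atTop (𝓝 0)}

/-- `B⁻(𝒜) = {v : ‖Φ(k,0)v‖ → 0 as k → -∞}`. -/
def Bminus {m : ℕ}
    (A : ℤ → (EuclideanSpace ℝ (Fin m) ≃L[ℝ] EuclideanSpace ℝ (Fin m))) :
    Set (EuclideanSpace ℝ (Fin m)) :=
  {v | Tendsto (fun k : ℤ => ‖Phi A k 0 v‖) atBot (𝓝 0)}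

/-- The sequence `𝒜` is hyperbolic on the ray `[0, +∞)`. -/
def HyperbolicOnPlusRay {m : ℕ}
    (A : ℤ → (EuclideanSpace ℝ (Fin m) ≃L[ℝ] EuclideanSpace ℝ (Fin m))) : Prop :=
  ∃ (C lam : ℝ)
    (P : ℤ → (EuclideanSpace ℝ (Fin m) →L[ℝ] EuclideanSpace ℝ (Fin m))),
    0 < C ∧ lam ∈ Set.Ioo (0 : ℝ) 1 ∧
    (∀ k : ℤ, 0 ≤ k → (P k).comp (P k) = P k) ∧
    (∀ k l : ℤ, 0 ≤ k → 0 ≤ l → (P k).comp (Phi A k l) = (Phi A k l).comp (P l)) ∧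
    (∀ k l : ℤ, 0 ≤ l → l ≤ k → ∀ v : EuclideanSpace ℝ (Fin m),
      ‖Phi A k l (P l v)‖ ≤ C * lam ^ (k - l).toNat * ‖v‖) ∧
    (∀ k l : ℤ, 0 ≤ k → k ≤ l → ∀ v : EuclideanSpace ℝ (Fin m),
      ‖Phi A k l ((1 - P l) v)‖ ≤ C * lam ^ (l - k).toNat * ‖v‖)

/-- The sequence `𝒜` is hyperbolic on the ray `(-∞, 0]`. -/
def HyperbolicOnMinusRay {m : ℕ}
    (A : ℤ → (EuclideanSpace ℝ (Fin m) ≃L[ℝ] EuclideanSpace ℝ (Fin m))) : Prop :=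
  ∃ (C lam : ℝ)
    (Q : ℤ → (EuclideanSpace ℝ (Fin m) →L[ℝ] EuclideanSpace ℝ (Fin m))),
    0 < C ∧ lam ∈ Set.Ioo (0 : ℝ) 1 ∧
    (∀ k : ℤ, k ≤ 0 → (Q k).comp (Q k) = Q k) ∧
    (∀ k l : ℤ, k ≤ 0 → l ≤ 0 → (Q k).comp (Phi A k l) = (Phi A k l).comp (Q l)) ∧
    (∀ k l : ℤ, l ≤ k → k ≤ 0 → ∀ v : EuclideanSpace ℝ (Fin m),
      ‖Phi A k l (Q l v)‖ ≤ C * lam ^ (k - l).toNat * ‖v‖) ∧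
    (∀ k l : ℤ, k ≤ l → l ≤ 0 → ∀ v : EuclideanSpace ℝ (Fin m),
      ‖Phi A k l ((1 - Q l) v)‖ ≤ C * lam ^ (l - k).toNat * ‖v‖)


section Aux

variable {m : ℕ} (A : ℤ → (EuclideanSpace ℝ (Fin m) ≃L[ℝ] EuclideanSpace ℝ (Fin m)))

local notation "E'" => EuclideanSpace ℝ (Fin m)

lemma Phi_self (k : ℤ) : Phi A k k = 1 := by
  simp [Phi, PhiPos]

lemma PhiNeg_succ_left (k : ℤ) (n : ℕ) :
    ((A k : E' →L[ℝ] E')).comp (PhiNeg A k (n + 1)) = PhiNeg A (k + 1) n := by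
  induction n with
  | zero =>
      ext v
      simp [PhiNeg]
  | succ n ih =>
      have h1 : PhiNeg A k (n + 2) =
          (PhiNeg A k (n + 1)).comp (((A (k + (n + 1 : ℕ))).symm : E' →L[ℝ] E')) := rfl
      have h2 : PhiNeg A (k + 1) (n + 1) =
          (PhiNeg A (k + 1) n).comp (((A ((k + 1) + (n : ℕ))).symm : E' →L[ℝ] E')) := rfl
      have h3 : (k + ((n : ℤ) + 1)) = (k + 1) + (n : ℤ) := by ring
      rw [h1, ← ContinuousLinearMap.comp_assoc, ih, h2]
      congr 2
      push_cast
      rw [h3]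

lemma Phi_succ (k : ℤ) :
    Phi A (k + 1) 0 = ((A k : E' →L[ℝ] E')).comp (Phi A k 0) := by
  rcases le_or_gt 0 k with hk | hk
  · rw [Phi, Phi, if_pos (by omega), if_pos hk]
    have h1 : (k + 1 - 0).toNat = (k - 0).toNat + 1 := by omega
    rw [h1]
    have h2 : PhiPos A 0 ((k - 0).toNat + 1) =
        ((A (0 + ((k - 0).toNat : ℕ)) : E' →L[ℝ] E')).comp (PhiPos A 0 (k - 0).toNat) := rfl
    rw [h2, show (0 + (((k - 0).toNat : ℕ) : ℤ)) = k from by omega]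
  · rcases (by omega : k = -1 ∨ k ≤ -2) with hk1 | hk1
    · subst hk1
      rw [Phi, Phi, if_pos (show (0:ℤ) ≤ -1 + 1 by omega), if_neg (show ¬(0:ℤ) ≤ -1 by omega)]
      have h1 : ((0 : ℤ) - (-1)).toNat = 1 := by omega
      rw [h1, show ((-1 : ℤ) + 1 - 0).toNat = 0 from by omega]
      have := PhiNeg_succ_left A (-1) 0
      rw [this]
      rfl
    · rw [Phi, Phi, if_neg (by omega), if_neg (by omega)]
      have h1 : ((0 : ℤ) - k).toNat = (0 - (k + 1)).toNat + 1 := by omega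
      rw [h1, PhiNeg_succ_left]

lemma Phi_zero_eq : Phi A 0 0 = 1 := Phi_self A 0

lemma Phi_succ_apply (k : ℤ) (x : E') :
    Phi A (k + 1) 0 x = A k (Phi A k 0 x) := by
  rw [Phi_succ]
  rfl

lemma sol_eq_Phi (g : ℤ → E') (hg : ∀ k : ℤ, g (k + 1) = A k (g k)) :
    ∀ k : ℤ, g k = Phi A k 0 (g 0) := by
  intro k
  induction k using Int.induction_on with
  | zero => rw [Phi_zero_eq]; rfl
  | succ n ih => rw [hg, ih, Phi_succ_apply]
  | pred n ih =>
      apply (A (-(n : ℤ) - 1)).injective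
      have h1 : (-(n : ℤ) - 1) + 1 = -(n : ℤ) := by ring
      have h2 := hg (-(n : ℤ) - 1)
      rw [h1] at h2
      rw [← h2, ih]
      have h3 := Phi_succ_apply A (-(n : ℤ) - 1) (g 0)
      rw [h1] at h3
      exact h3

lemma sol_eq_Phi_forward (g : ℤ → E') (hg : ∀ k : ℤ, 0 ≤ k → g (k + 1) = A k (g k)) :
    ∀ k : ℤ, 0 ≤ k → g k = Phi A k 0 (g 0) := by
  refine Int.le_induction ?_ ?_
  · rw [Phi_zero_eq]; rfl
  · intro n hn ih
    rw [hg n hn, ih, Phi_succ_apply]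

end Aux

section Aux2

variable {m : ℕ} (A : ℤ → (EuclideanSpace ℝ (Fin m) ≃L[ℝ] EuclideanSpace ℝ (Fin m)))

local notation "E'" => EuclideanSpace ℝ (Fin m)

/-- Vectors with bounded forward orbit. -/
def Vplus : Submodule ℝ (EuclideanSpace ℝ (Fin m)) where
  carrier := {x | ∃ M : ℝ, ∀ k : ℤ, 0 ≤ k → ‖Phi A k 0 x‖ ≤ M}
  add_mem' := by
    rintro a b ⟨Ma, hMa⟩ ⟨Mb, hMb⟩
    refine ⟨Ma + Mb, fun k hk => ?_⟩
    rw [map_add]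
    exact (norm_add_le _ _).trans (add_le_add (hMa k hk) (hMb k hk))
  zero_mem' := ⟨0, fun k hk => by simp⟩
  smul_mem' := by
    rintro c x ⟨M, hM⟩
    refine ⟨|c| * M, fun k hk => ?_⟩
    rw [map_smul, norm_smul, Real.norm_eq_abs]
    exact mul_le_mul_of_nonneg_left (hM k hk) (abs_nonneg c)

/-- Vectors with bounded backward orbit. -/
def Vminus : Submodule ℝ (EuclideanSpace ℝ (Fin m)) where
  carrier := {x | ∃ M : ℝ, ∀ k : ℤ, k ≤ 0 → ‖Phi A k 0 x‖ ≤ M}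
  add_mem' := by
    rintro a b ⟨Ma, hMa⟩ ⟨Mb, hMb⟩
    refine ⟨Ma + Mb, fun k hk => ?_⟩
    rw [map_add]
    exact (norm_add_le _ _).trans (add_le_add (hMa k hk) (hMb k hk))
  zero_mem' := ⟨0, fun k hk => by simp⟩
  smul_mem' := by
    rintro c x ⟨M, hM⟩
    refine ⟨|c| * M, fun k hk => ?_⟩
    rw [map_smul, norm_smul, Real.norm_eq_abs]
    exact mul_le_mul_of_nonneg_left (hM k hk) (abs_nonneg c)

lemma bs_plus : ∃ c : ℝ, 0 ≤ c ∧
    ∀ x ∈ Vplus A, ∀ k : ℤ, 0 ≤ k → ‖Phi A k 0 x‖ ≤ c * ‖x‖ := by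
  haveI : CompleteSpace (Vplus A) := FiniteDimensional.complete ℝ _
  set g : {k : ℤ // 0 ≤ k} → ((Vplus A) →L[ℝ] E') :=
    fun k => (Phi A k 0).comp (Vplus A).subtypeL with hg
  have h : ∀ x : Vplus A, ∃ C, ∀ i, ‖g i x‖ ≤ C := by
    rintro ⟨x, hx⟩
    obtain ⟨M, hM⟩ := hx
    exact ⟨M, fun i => hM i i.2⟩
  obtain ⟨C', hC'⟩ := banach_steinhaus h
  refine ⟨max C' 0, le_max_right _ _, fun x hx k hk => ?_⟩
  have h2 := (g ⟨k, hk⟩).le_opNorm ⟨x, hx⟩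
  have h3 : ‖g ⟨k, hk⟩ ⟨x, hx⟩‖ = ‖Phi A k 0 x‖ := rfl
  have h4 : ‖(⟨x, hx⟩ : Vplus A)‖ = ‖x‖ := rfl
  rw [h3, h4] at h2
  exact h2.trans (mul_le_mul_of_nonneg_right ((hC' _).trans (le_max_left _ _)) (norm_nonneg _))

lemma bs_minus : ∃ c : ℝ, 0 ≤ c ∧
    ∀ x ∈ Vminus A, ∀ k : ℤ, k ≤ 0 → ‖Phi A k 0 x‖ ≤ c * ‖x‖ := by
  haveI : CompleteSpace (Vminus A) := FiniteDimensional.complete ℝ _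
  set g : {k : ℤ // k ≤ 0} → ((Vminus A) →L[ℝ] E') :=
    fun k => (Phi A k 0).comp (Vminus A).subtypeL with hg
  have h : ∀ x : Vminus A, ∃ C, ∀ i, ‖g i x‖ ≤ C := by
    rintro ⟨x, hx⟩
    obtain ⟨M, hM⟩ := hx
    exact ⟨M, fun i => hM i i.2⟩
  obtain ⟨C', hC'⟩ := banach_steinhaus h
  refine ⟨max C' 0, le_max_right _ _, fun x hx k hk => ?_⟩
  have h2 := (g ⟨k, hk⟩).le_opNorm ⟨x, hx⟩
  have h3 : ‖g ⟨k, hk⟩ ⟨x, hx⟩‖ = ‖Phi A k 0 x‖ := rfl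
  have h4 : ‖(⟨x, hx⟩ : Vminus A)‖ = ‖x‖ := rfl
  rw [h3, h4] at h2
  exact h2.trans (mul_le_mul_of_nonneg_right ((hC' _).trans (le_max_left _ _)) (norm_nonneg _))

end Aux2

section Aux3
open scoped ENNReal

variable {m : ℕ} (A : ℤ → (EuclideanSpace ℝ (Fin m) ≃L[ℝ] EuclideanSpace ℝ (Fin m)))

local notation "E'" => EuclideanSpace ℝ (Fin m)

set_option maxHeartbeats 1000000 in
lemma uniform_solv (N : ℝ) (hN : 0 < N)
    (hA : ∀ k : ℤ, ‖(A k : E' →L[ℝ] E')‖ ≤ N)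
    (hsolv : ∀ w : ℤ → E', (∃ C : ℝ, ∀ k : ℤ, ‖w k‖ ≤ C) →
      ∃ v : ℤ → E', (∃ C : ℝ, ∀ k : ℤ, ‖v k‖ ≤ C) ∧
        ∀ k : ℤ, v (k + 1) = A k (v k) + w k) :
    ∃ K : ℝ, 0 < K ∧ ∀ w : ℤ → E', (∀ k : ℤ, ‖w k‖ ≤ 1) →
      ∃ v : ℤ → E', (∀ k : ℤ, ‖v k‖ ≤ K) ∧ ∀ k : ℤ, v (k + 1) = A k (v k) + w k := by
  haveI : Fact ((1 : ENNReal) ≤ ∞) := ⟨le_top⟩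
  -- the ℓ∞ space
  have hmem : ∀ v : lp (fun _ : ℤ => E') ∞,
      Memℓp (fun k : ℤ => v (k + 1) - A k (v k)) ∞ := by
    intro v
    apply memℓp_infty
    refine ⟨(1 + N) * ‖v‖, ?_⟩
    rintro - ⟨k, rfl⟩
    have h1 : ‖v (k + 1)‖ ≤ ‖v‖ := lp.norm_apply_le_norm ENNReal.top_ne_zero v (k + 1)
    have h2 : ‖A k (v k)‖ ≤ N * ‖v‖ := by
      have := (A k : E' →L[ℝ] E').le_opNorm (v k)
      have h3 : ‖v k‖ ≤ ‖v‖ := lp.norm_apply_le_norm ENNReal.top_ne_zero v k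
      calc ‖A k (v k)‖ = ‖(A k : E' →L[ℝ] E') (v k)‖ := rfl
        _ ≤ ‖(A k : E' →L[ℝ] E')‖ * ‖v k‖ := this
        _ ≤ N * ‖v‖ := by
            apply mul_le_mul (hA k) h3 (norm_nonneg _) hN.le
    calc ‖v (k + 1) - A k (v k)‖ ≤ ‖v (k + 1)‖ + ‖A k (v k)‖ := norm_sub_le _ _
      _ ≤ ‖v‖ + N * ‖v‖ := add_le_add h1 h2
      _ = (1 + N) * ‖v‖ := by ring
  set Tlin : lp (fun _ : ℤ => E') ∞ →ₗ[ℝ] lp (fun _ : ℤ => E') ∞ :=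
    { toFun := fun v => ⟨fun k : ℤ => v (k + 1) - A k (v k), hmem v⟩
      map_add' := by
        intro v w
        apply Subtype.ext
        funext k
        have hv : (v + w) (k + 1) = v (k + 1) + w (k + 1) := by
          rw [lp.coeFn_add]; rfl
        have hv2 : (v + w) k = v k + w k := by
          rw [lp.coeFn_add]; rfl
        show (v + w) (k + 1) - A k ((v + w) k) = _
        rw [hv, hv2, map_add]
        show _ = (v (k + 1) - A k (v k)) + (w (k + 1) - A k (w k))
        abel
      map_smul' := by
        intro c v
        apply Subtype.ext
        funext k
        have hv : (c • v) (k + 1) = c • (v (k + 1)) := by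
          rw [lp.coeFn_smul]; rfl
        have hv2 : (c • v) k = c • (v k) := by
          rw [lp.coeFn_smul]; rfl
        show (c • v) (k + 1) - A k ((c • v) k) = _
        rw [hv, hv2, map_smul]
        show _ = c • (v (k + 1) - A k (v k))
        rw [smul_sub] } with hTlin
  have hbound : ∀ v : lp (fun _ : ℤ => E') ∞, ‖Tlin v‖ ≤ (1 + N) * ‖v‖ := by
    intro v
    apply lp.norm_le_of_forall_le (by positivity)
    intro k
    show ‖v (k + 1) - A k (v k)‖ ≤ (1 + N) * ‖v‖
    have h1 : ‖v (k + 1)‖ ≤ ‖v‖ := lp.norm_apply_le_norm ENNReal.top_ne_zero v (k + 1)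
    have h3 : ‖v k‖ ≤ ‖v‖ := lp.norm_apply_le_norm ENNReal.top_ne_zero v k
    have h2 : ‖A k (v k)‖ ≤ N * ‖v‖ := by
      calc ‖A k (v k)‖ = ‖(A k : E' →L[ℝ] E') (v k)‖ := rfl
        _ ≤ ‖(A k : E' →L[ℝ] E')‖ * ‖v k‖ := (A k : E' →L[ℝ] E').le_opNorm (v k)
        _ ≤ N * ‖v‖ := mul_le_mul (hA k) h3 (norm_nonneg _) hN.le
    calc ‖v (k + 1) - A k (v k)‖ ≤ ‖v (k + 1)‖ + ‖A k (v k)‖ := norm_sub_le _ _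
      _ ≤ ‖v‖ + N * ‖v‖ := add_le_add h1 h2
      _ = (1 + N) * ‖v‖ := by ring
  set T : lp (fun _ : ℤ => E') ∞ →L[ℝ] lp (fun _ : ℤ => E') ∞ :=
    Tlin.mkContinuous (1 + N) hbound with hT
  have hsurj : Function.Surjective T := by
    intro w
    have hwb : ∃ C : ℝ, ∀ k : ℤ, ‖w k‖ ≤ C :=
      ⟨‖w‖, fun k => lp.norm_apply_le_norm ENNReal.top_ne_zero w k⟩
    obtain ⟨v, ⟨Cv, hCv⟩, hrec⟩ := hsolv (fun k => w k) hwb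
    have hvmem : Memℓp v ∞ := by
      apply memℓp_infty
      refine ⟨Cv, ?_⟩
      rintro - ⟨k, rfl⟩
      exact hCv k
    refine ⟨⟨v, hvmem⟩, ?_⟩
    apply Subtype.ext
    funext k
    show v (k + 1) - A k (v k) = w k
    rw [hrec k]
    abel
  obtain ⟨C, hCpos, hC⟩ := T.exists_preimage_norm_le hsurj
  refine ⟨C, hCpos, fun w hw => ?_⟩
  have hwmem : Memℓp w ∞ := by
    apply memℓp_infty
    refine ⟨1, ?_⟩
    rintro - ⟨k, rfl⟩
    exact hw k
  obtain ⟨v, hTv, hnv⟩ := hC ⟨w, hwmem⟩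
  have hnw : ‖(⟨w, hwmem⟩ : lp (fun _ : ℤ => E') ∞)‖ ≤ 1 := by
    apply lp.norm_le_of_forall_le zero_le_one
    intro k
    exact hw k
  refine ⟨fun k => v k, fun k => ?_, fun k => ?_⟩
  · calc ‖v k‖ ≤ ‖v‖ := lp.norm_apply_le_norm ENNReal.top_ne_zero v k
      _ ≤ C * ‖(⟨w, hwmem⟩ : lp (fun _ : ℤ => E') ∞)‖ := hnv
      _ ≤ C * 1 := mul_le_mul_of_nonneg_left hnw hCpos.le
      _ = C := mul_one C
  · have h5 : (v : ∀ _ : ℤ, E') (k + 1) - A k ((v : ∀ _ : ℤ, E') k) = w k :=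
      congrArg (fun f : lp (fun _ : ℤ => E') ∞ => (f : ∀ _ : ℤ, E') k) hTv
    show (v : ∀ _ : ℤ, E') (k + 1) = A k ((v : ∀ _ : ℤ, E') k) + w k
    rw [sub_eq_iff_eq_add.mp h5]
    abel
end Aux3

section Aux4

variable {m : ℕ} (A : ℤ → (EuclideanSpace ℝ (Fin m) ≃L[ℝ] EuclideanSpace ℝ (Fin m)))

local notation "E'" => EuclideanSpace ℝ (Fin m)

set_option maxHeartbeats 1000000 in
lemma decay_plus (K c : ℝ) (hK : 0 < K) (hc : 0 ≤ c)
    (hsolv1 : ∀ w : ℤ → E', (∀ k : ℤ, ‖w k‖ ≤ 1) →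
      ∃ v : ℤ → E', (∀ k : ℤ, ‖v k‖ ≤ K) ∧ ∀ k : ℤ, v (k + 1) = A k (v k) + w k)
    (hbs : ∀ x ∈ Vplus A, ∀ k : ℤ, 0 ≤ k → ‖Phi A k 0 x‖ ≤ c * ‖x‖)
    (x : EuclideanSpace ℝ (Fin m)) (hx : x ∈ Vplus A) : x ∈ Bplus A := by
  set z : ℤ → E' := fun k => Phi A k 0 x with hz
  have hzsucc : ∀ k : ℤ, z (k + 1) = A k (z k) := fun k => Phi_succ_apply A k x
  by_cases hzero : ∃ k0 : ℤ, 0 ≤ k0 ∧ z k0 = 0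
  · obtain ⟨k0, hk0, hzk0⟩ := hzero
    have hz0 : ∀ k : ℤ, k0 ≤ k → z k = 0 := by
      refine Int.le_induction hzk0 ?_
      intro n hn ih
      rw [hzsucc n, ih, map_zero]
    have heq : (fun k : ℤ => ‖z k‖) =ᶠ[atTop] fun _ => (0 : ℝ) := by
      filter_upwards [eventually_ge_atTop k0] with k hk
      rw [hz0 k hk, norm_zero]
    exact Filter.Tendsto.congr' heq.symm tendsto_const_nhds
  · push_neg at hzero
    obtain ⟨M0, hM0⟩ := hx
    set M : ℝ := max M0 1 with hM
    have hMpos : (0 : ℝ) < M := lt_of_lt_of_le one_pos (le_max_right _ _)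
    have hMb : ∀ k : ℤ, 0 ≤ k → ‖z k‖ ≤ M := fun k hk => (hM0 k hk).trans (le_max_left _ _)
    show Tendsto (fun k : ℤ => ‖Phi A k 0 x‖) atTop (𝓝 0)
    rw [Metric.tendsto_atTop]
    intro ε hε
    by_contra hcon
    push_neg at hcon
    set S : ℕ → ℝ := fun n => ∑ j ∈ Finset.range n, ‖z ((j : ℤ) + 1)‖⁻¹ with hS
    have hSnonneg : ∀ n, 0 ≤ S n :=
      fun n => Finset.sum_nonneg fun j _ => inv_nonneg.mpr (norm_nonneg _)
    have hSmono : Monotone S := fun a b hab =>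
      Finset.sum_le_sum_of_subset_of_nonneg (Finset.range_subset_range.mpr hab)
        fun j _ _ => inv_nonneg.mpr (norm_nonneg _)
    have claimA : ∀ n : ℕ, S n * ‖z (n : ℤ)‖ ≤ K * (1 + c) := by
      intro n
      set w : ℤ → E' := fun j =>
        if 0 ≤ j ∧ j < (n : ℤ) then ‖z (j + 1)‖⁻¹ • z (j + 1) else 0 with hwdef
      have hw : ∀ j : ℤ, ‖w j‖ ≤ 1 := by
        intro j
        show ‖if 0 ≤ j ∧ j < (n : ℤ) then ‖z (j + 1)‖⁻¹ • z (j + 1) else 0‖ ≤ 1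
        split_ifs with hj
        · rw [norm_smul, Real.norm_eq_abs, abs_inv, abs_norm,
            inv_mul_cancel₀ (norm_ne_zero_iff.mpr (hzero (j + 1) (by omega)))]
        · rw [norm_zero]; exact zero_le_one
      obtain ⟨v, hvK, hrec⟩ := hsolv1 w hw
      set p : ℤ → E' := fun k => S (min k (n : ℤ)).toNat • z k with hp
      have hS0 : S 0 = 0 := by simp [hS]
      have hps : ∀ k : ℤ, p (k + 1) = A k (p k) + w k := by
        intro k
        show S (min (k + 1) (n : ℤ)).toNat • z (k + 1)
            = A k (S (min k (n : ℤ)).toNat • z k) + w k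
        by_cases h1 : k < 0
        · have e1 : (min (k + 1) (n : ℤ)).toNat = 0 := by omega
          have e2 : (min k (n : ℤ)).toNat = 0 := by omega
          have e3 : w k = 0 := by
            show (if 0 ≤ k ∧ k < (n : ℤ) then _ else 0) = 0
            exact if_neg (by omega)
          rw [e1, e2, e3, hS0, zero_smul, zero_smul, map_zero, add_zero]
        · by_cases h2 : (n : ℤ) ≤ k
          · have e1 : (min (k + 1) (n : ℤ)).toNat = n := by omega
            have e2 : (min k (n : ℤ)).toNat = n := by omega
            have e3 : w k = 0 := by
              show (if 0 ≤ k ∧ k < (n : ℤ) then _ else 0) = 0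
              exact if_neg (by omega)
            rw [e1, e2, e3, add_zero, hzsucc k, map_smul]
          · push_neg at h1 h2
            have e1 : (min (k + 1) (n : ℤ)).toNat = k.toNat + 1 := by omega
            have e2 : (min k (n : ℤ)).toNat = k.toNat := by omega
            have e3 : w k = ‖z (k + 1)‖⁻¹ • z (k + 1) := by
              show (if 0 ≤ k ∧ k < (n : ℤ) then ‖z (k + 1)‖⁻¹ • z (k + 1) else 0) = _
              exact if_pos ⟨h1, h2⟩
            have e4 : S (k.toNat + 1) = S k.toNat + ‖z ((k.toNat : ℤ) + 1)‖⁻¹ :=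
              Finset.sum_range_succ _ _
            have e5 : ((k.toNat : ℤ)) = k := by omega
            rw [e5] at e4
            rw [e1, e2, e3, e4, add_smul, map_smul, ← hzsucc k]
      set g : ℤ → E' := fun k => v k - p k with hgdef
      have hgsucc : ∀ k : ℤ, g (k + 1) = A k (g k) := by
        intro k
        show v (k + 1) - p (k + 1) = A k (v k - p k)
        rw [hrec k, hps k, map_sub]
        abel
      have hgPhi := sol_eq_Phi A g hgsucc
      have hp0 : p 0 = 0 := by
        show S (min (0 : ℤ) (n : ℤ)).toNat • z 0 = 0
        rw [show (min (0 : ℤ) (n : ℤ)).toNat = 0 from by omega, hS0, zero_smul]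
      have hg0 : g 0 = v 0 := by show v 0 - p 0 = v 0; rw [hp0, sub_zero]
      have hpb : ∀ k : ℤ, 0 ≤ k → ‖p k‖ ≤ S n * M := by
        intro k hk
        show ‖S (min k (n : ℤ)).toNat • z k‖ ≤ S n * M
        rw [norm_smul, Real.norm_eq_abs, abs_of_nonneg (hSnonneg _)]
        exact mul_le_mul (hSmono (by omega : (min k (n : ℤ)).toNat ≤ n)) (hMb k hk)
          (norm_nonneg _) (hSnonneg n)
      have hmemg : g 0 ∈ Vplus A := by
        refine ⟨K + S n * M, fun k hk => ?_⟩
        rw [← hgPhi k]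
        exact (norm_sub_le _ _).trans (add_le_add (hvK k) (hpb k hk))
      have hgbound : ∀ k : ℤ, 0 ≤ k → ‖g k‖ ≤ c * K := by
        intro k hk
        rw [hgPhi k]
        refine (hbs _ hmemg k hk).trans ?_
        have h6 : ‖g 0‖ ≤ K := by rw [hg0]; exact hvK 0
        exact mul_le_mul_of_nonneg_left h6 hc
      have hpn : p (n : ℤ) = S n • z (n : ℤ) := by
        show S (min (n : ℤ) (n : ℤ)).toNat • z (n : ℤ) = _
        rw [show (min (n : ℤ) (n : ℤ)).toNat = n from by omega]
      calc S n * ‖z (n : ℤ)‖ = ‖p (n : ℤ)‖ := by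
            rw [hpn, norm_smul, Real.norm_eq_abs, abs_of_nonneg (hSnonneg n)]
        _ = ‖v (n : ℤ) - g (n : ℤ)‖ := by
            show _ = ‖v (n : ℤ) - (v (n : ℤ) - p (n : ℤ))‖
            rw [sub_sub_cancel]
        _ ≤ ‖v (n : ℤ)‖ + ‖g (n : ℤ)‖ := norm_sub_le _ _
        _ ≤ K + c * K := add_le_add (hvK _) (hgbound _ (Int.natCast_nonneg n))
        _ = K * (1 + c) := by ring
    have claimB : ∀ n : ℕ, (n : ℝ) * M⁻¹ ≤ S n := by
      intro n
      have h7 : ∀ j ∈ Finset.range n, M⁻¹ ≤ ‖z ((j : ℤ) + 1)‖⁻¹ := by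
        intro j _
        exact inv_anti₀ (norm_pos_iff.mpr (hzero ((j : ℤ) + 1) (by omega)))
          (hMb ((j : ℤ) + 1) (by omega))
      calc (n : ℝ) * M⁻¹ = ∑ _j ∈ Finset.range n, M⁻¹ := by
            rw [Finset.sum_const, Finset.card_range, nsmul_eq_mul]
        _ ≤ S n := Finset.sum_le_sum h7
    obtain ⟨k, hk1, hk2⟩ := hcon (max 0 (⌈K * (1 + c) * M / ε⌉ + 1))
    have hk0 : (0 : ℤ) ≤ k := le_trans (le_max_left _ _) hk1
    have hzk : ε ≤ ‖z k‖ := by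
      rw [Real.dist_eq, sub_zero, abs_of_nonneg (norm_nonneg _)] at hk2
      exact hk2
    set n : ℕ := k.toNat with hn
    have hcast : ((n : ℤ)) = k := by omega
    have h1 : S n * ‖z k‖ ≤ K * (1 + c) := by
      have := claimA n; rwa [hcast] at this
    have h2 : (n : ℝ) * M⁻¹ * ε ≤ S n * ‖z k‖ :=
      mul_le_mul (claimB n) hzk hε.le (hSnonneg n)
    have hnlarge : K * (1 + c) * M / ε < (n : ℝ) := by
      have h3 : (⌈K * (1 + c) * M / ε⌉ + 1 : ℤ) ≤ k := le_trans (le_max_right _ _) hk1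
      have h4 : K * (1 + c) * M / ε ≤ (⌈K * (1 + c) * M / ε⌉ : ℝ) := Int.le_ceil _
      have h5 : ((⌈K * (1 + c) * M / ε⌉ + 1 : ℤ) : ℝ) ≤ ((k : ℤ) : ℝ) := by exact_mod_cast h3
      have h6 : ((k : ℤ) : ℝ) = (n : ℝ) := by exact_mod_cast congrArg (fun t : ℤ => (t : ℝ)) hcast.symm
      push_cast at h5
      linarith
    have hfin : K * (1 + c) < (n : ℝ) * M⁻¹ * ε := by
      rw [div_lt_iff₀ hε] at hnlarge
      have h8 : K * (1 + c) * M * M⁻¹ < (n : ℝ) * ε * M⁻¹ :=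
        mul_lt_mul_of_pos_right hnlarge (inv_pos.mpr hMpos)
      have h9 : K * (1 + c) * M * M⁻¹ = K * (1 + c) := by field_simp
      rw [h9] at h8
      calc K * (1 + c) < (n : ℝ) * ε * M⁻¹ := h8
        _ = (n : ℝ) * M⁻¹ * ε := by ring
    linarith

end Aux4
section Aux5

variable {m : ℕ} (A : ℤ → (EuclideanSpace ℝ (Fin m) ≃L[ℝ] EuclideanSpace ℝ (Fin m)))

local notation "E'" => EuclideanSpace ℝ (Fin m)

set_option maxHeartbeats 1000000 in
lemma decay_minus (K c : ℝ) (hK : 0 < K) (hc : 0 ≤ c)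
    (hsolv1 : ∀ w : ℤ → E', (∀ k : ℤ, ‖w k‖ ≤ 1) →
      ∃ v : ℤ → E', (∀ k : ℤ, ‖v k‖ ≤ K) ∧ ∀ k : ℤ, v (k + 1) = A k (v k) + w k)
    (hbs : ∀ x ∈ Vminus A, ∀ k : ℤ, k ≤ 0 → ‖Phi A k 0 x‖ ≤ c * ‖x‖)
    (x : EuclideanSpace ℝ (Fin m)) (hx : x ∈ Vminus A) : x ∈ Bminus A := by
  set z : ℤ → E' := fun k => Phi A k 0 x with hz
  have hzsucc : ∀ k : ℤ, z (k + 1) = A k (z k) := fun k => Phi_succ_apply A k x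
  by_cases hzero : ∃ k0 : ℤ, k0 ≤ 0 ∧ z k0 = 0
  · obtain ⟨k0, hk0, hzk0⟩ := hzero
    have hdown : ∀ n : ℕ, z (k0 - (n : ℤ)) = 0 := by
      intro n
      induction n with
      | zero => simpa using hzk0
      | succ n ih =>
          have e : (k0 - ((n : ℤ) + 1)) + 1 = k0 - (n : ℤ) := by ring
          have e2 : k0 - ((n + 1 : ℕ) : ℤ) = k0 - ((n : ℤ) + 1) := by push_cast; ring
          rw [e2]
          apply (A (k0 - ((n : ℤ) + 1))).injective
          rw [map_zero, ← hzsucc (k0 - ((n : ℤ) + 1)), e, ih]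
    have hz0 : ∀ k : ℤ, k ≤ k0 → z k = 0 := by
      intro k hk
      have e : k = k0 - (((k0 - k).toNat : ℕ) : ℤ) := by omega
      rw [e]
      exact hdown _
    have heq : (fun k : ℤ => ‖z k‖) =ᶠ[atBot] fun _ => (0 : ℝ) := by
      filter_upwards [eventually_le_atBot k0] with k hk
      rw [hz0 k hk, norm_zero]
    exact Filter.Tendsto.congr' heq.symm tendsto_const_nhds
  · push_neg at hzero
    obtain ⟨M0, hM0⟩ := hx
    set M : ℝ := max M0 1 with hM
    have hMpos : (0 : ℝ) < M := lt_of_lt_of_le one_pos (le_max_right _ _)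
    have hMb : ∀ k : ℤ, k ≤ 0 → ‖z k‖ ≤ M := fun k hk => (hM0 k hk).trans (le_max_left _ _)
    show Tendsto (fun k : ℤ => ‖Phi A k 0 x‖) atBot (𝓝 0)
    have hred : Tendsto (fun k : ℤ => ‖Phi A (-k) 0 x‖) atTop (𝓝 0) →
        Tendsto (fun k : ℤ => ‖Phi A k 0 x‖) atBot (𝓝 0) := by
      intro h
      have h2 := h.comp tendsto_neg_atBot_atTop
      simpa [Function.comp_def] using h2
    apply hred
    rw [Metric.tendsto_atTop]
    intro ε hε
    by_contra hcon
    push_neg at hcon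
    set S : ℕ → ℝ := fun n => ∑ j ∈ Finset.range n, ‖z (-(j : ℤ))‖⁻¹ with hS
    have hSnonneg : ∀ n, 0 ≤ S n :=
      fun n => Finset.sum_nonneg fun j _ => inv_nonneg.mpr (norm_nonneg _)
    have hSmono : Monotone S := fun a b hab =>
      Finset.sum_le_sum_of_subset_of_nonneg (Finset.range_subset_range.mpr hab)
        fun j _ _ => inv_nonneg.mpr (norm_nonneg _)
    have hsmul : ∀ (a b : ℝ) (y : E'), (-(a + b)) • y + b • y = (-a) • y := by
      intro a b y
      rw [neg_add, add_smul, add_assoc, neg_smul b, neg_add_cancel, add_zero]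
    have claimA : ∀ n : ℕ, S n * ‖z (-(n : ℤ))‖ ≤ K * (1 + c) := by
      intro n
      set w : ℤ → E' := fun j =>
        if -(n : ℤ) ≤ j ∧ j < 0 then ‖z (j + 1)‖⁻¹ • z (j + 1) else 0 with hwdef
      have hw : ∀ j : ℤ, ‖w j‖ ≤ 1 := by
        intro j
        show ‖if -(n : ℤ) ≤ j ∧ j < 0 then ‖z (j + 1)‖⁻¹ • z (j + 1) else 0‖ ≤ 1
        split_ifs with hj
        · rw [norm_smul, Real.norm_eq_abs, abs_inv, abs_norm,
            inv_mul_cancel₀ (norm_ne_zero_iff.mpr (hzero (j + 1) (by omega)))]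
        · rw [norm_zero]; exact zero_le_one
      obtain ⟨v, hvK, hrec⟩ := hsolv1 w hw
      set p : ℤ → E' := fun k => (-(S (min (-k) (n : ℤ)).toNat)) • z k with hp
      have hS0 : S 0 = 0 := by simp [hS]
      have hps : ∀ k : ℤ, p (k + 1) = A k (p k) + w k := by
        intro k
        show (-(S (min (-(k + 1)) (n : ℤ)).toNat)) • z (k + 1)
            = A k ((-(S (min (-k) (n : ℤ)).toNat)) • z k) + w k
        by_cases h1 : 0 ≤ k
        · have e1 : (min (-(k + 1)) (n : ℤ)).toNat = 0 := by omega
          have e2 : (min (-k) (n : ℤ)).toNat = 0 := by omega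
          have e3 : w k = 0 := by
            show (if -(n : ℤ) ≤ k ∧ k < 0 then _ else 0) = 0
            exact if_neg (by omega)
          rw [e1, e2, e3, hS0, neg_zero, zero_smul, zero_smul, map_zero, add_zero]
        · by_cases h2 : k < -(n : ℤ)
          · have e1 : (min (-(k + 1)) (n : ℤ)).toNat = n := by omega
            have e2 : (min (-k) (n : ℤ)).toNat = n := by omega
            have e3 : w k = 0 := by
              show (if -(n : ℤ) ≤ k ∧ k < 0 then _ else 0) = 0
              exact if_neg (by omega)
            rw [e1, e2, e3, add_zero, hzsucc k, map_smul]
          · push_neg at h1 h2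
            have e1 : (min (-(k + 1)) (n : ℤ)).toNat = (-(k + 1)).toNat := by omega
            have e2 : (min (-k) (n : ℤ)).toNat = (-(k + 1)).toNat + 1 := by omega
            have e3 : w k = ‖z (k + 1)‖⁻¹ • z (k + 1) := by
              show (if -(n : ℤ) ≤ k ∧ k < 0 then ‖z (k + 1)‖⁻¹ • z (k + 1) else 0) = _
              exact if_pos ⟨h2, h1⟩
            have e4 : S ((-(k + 1)).toNat + 1)
                = S ((-(k + 1)).toNat) + ‖z (-(((-(k + 1)).toNat : ℕ) : ℤ))‖⁻¹ :=
              Finset.sum_range_succ _ _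
            have e5 : -((((-(k + 1)).toNat : ℕ)) : ℤ) = k + 1 := by omega
            rw [e5] at e4
            rw [e1, e2, e3, e4, map_smul, ← hzsucc k, hsmul]
      set g : ℤ → E' := fun k => v k - p k with hgdef
      have hgsucc : ∀ k : ℤ, g (k + 1) = A k (g k) := by
        intro k
        show v (k + 1) - p (k + 1) = A k (v k - p k)
        rw [hrec k, hps k, map_sub]
        abel
      have hgPhi := sol_eq_Phi A g hgsucc
      have hp0 : p 0 = 0 := by
        show (-(S (min (-(0 : ℤ)) (n : ℤ)).toNat)) • z 0 = 0
        rw [show (min (-(0 : ℤ)) (n : ℤ)).toNat = 0 from by omega, hS0, neg_zero, zero_smul]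
      have hg0 : g 0 = v 0 := by show v 0 - p 0 = v 0; rw [hp0, sub_zero]
      have hpb : ∀ k : ℤ, k ≤ 0 → ‖p k‖ ≤ S n * M := by
        intro k hk
        show ‖(-(S (min (-k) (n : ℤ)).toNat)) • z k‖ ≤ S n * M
        rw [norm_smul, Real.norm_eq_abs, abs_neg, abs_of_nonneg (hSnonneg _)]
        exact mul_le_mul (hSmono (by omega : (min (-k) (n : ℤ)).toNat ≤ n)) (hMb k hk)
          (norm_nonneg _) (hSnonneg n)
      have hmemg : g 0 ∈ Vminus A := by
        refine ⟨K + S n * M, fun k hk => ?_⟩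
        rw [← hgPhi k]
        exact (norm_sub_le _ _).trans (add_le_add (hvK k) (hpb k hk))
      have hgbound : ∀ k : ℤ, k ≤ 0 → ‖g k‖ ≤ c * K := by
        intro k hk
        rw [hgPhi k]
        refine (hbs _ hmemg k hk).trans ?_
        have h6 : ‖g 0‖ ≤ K := by rw [hg0]; exact hvK 0
        exact mul_le_mul_of_nonneg_left h6 hc
      have hpn : p (-(n : ℤ)) = (-(S n)) • z (-(n : ℤ)) := by
        show (-(S (min (-(-(n : ℤ))) (n : ℤ)).toNat)) • z (-(n : ℤ)) = _
        rw [show (min (-(-(n : ℤ))) (n : ℤ)).toNat = n from by omega]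
      calc S n * ‖z (-(n : ℤ))‖ = ‖p (-(n : ℤ))‖ := by
            rw [hpn, norm_smul, Real.norm_eq_abs, abs_neg, abs_of_nonneg (hSnonneg n)]
        _ = ‖v (-(n : ℤ)) - g (-(n : ℤ))‖ := by
            show _ = ‖v (-(n : ℤ)) - (v (-(n : ℤ)) - p (-(n : ℤ)))‖
            rw [sub_sub_cancel]
        _ ≤ ‖v (-(n : ℤ))‖ + ‖g (-(n : ℤ))‖ := norm_sub_le _ _
        _ ≤ K + c * K := add_le_add (hvK _) (hgbound _ (by omega))
        _ = K * (1 + c) := by ring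
    have claimB : ∀ n : ℕ, (n : ℝ) * M⁻¹ ≤ S n := by
      intro n
      have h7 : ∀ j ∈ Finset.range n, M⁻¹ ≤ ‖z (-(j : ℤ))‖⁻¹ := by
        intro j _
        exact inv_anti₀ (norm_pos_iff.mpr (hzero (-(j : ℤ)) (by omega)))
          (hMb (-(j : ℤ)) (by omega))
      calc (n : ℝ) * M⁻¹ = ∑ _j ∈ Finset.range n, M⁻¹ := by
            rw [Finset.sum_const, Finset.card_range, nsmul_eq_mul]
        _ ≤ S n := Finset.sum_le_sum h7
    obtain ⟨k, hk1, hk2⟩ := hcon (max 0 (⌈K * (1 + c) * M / ε⌉ + 1))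
    have hk0 : (0 : ℤ) ≤ k := le_trans (le_max_left _ _) hk1
    have hzk : ε ≤ ‖z (-k)‖ := by
      rw [Real.dist_eq, sub_zero, abs_of_nonneg (norm_nonneg _)] at hk2
      exact hk2
    set n : ℕ := k.toNat with hn
    have hcast : -((n : ℤ)) = -k := by omega
    have h1 : S n * ‖z (-k)‖ ≤ K * (1 + c) := by
      have := claimA n; rwa [hcast] at this
    have h2 : (n : ℝ) * M⁻¹ * ε ≤ S n * ‖z (-k)‖ :=
      mul_le_mul (claimB n) hzk hε.le (hSnonneg n)
    have hnlarge : K * (1 + c) * M / ε < (n : ℝ) := by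
      have h3 : (⌈K * (1 + c) * M / ε⌉ + 1 : ℤ) ≤ k := le_trans (le_max_right _ _) hk1
      have h4 : K * (1 + c) * M / ε ≤ (⌈K * (1 + c) * M / ε⌉ : ℝ) := Int.le_ceil _
      have h5 : ((⌈K * (1 + c) * M / ε⌉ + 1 : ℤ) : ℝ) ≤ ((k : ℤ) : ℝ) := by exact_mod_cast h3
      have h6 : ((k : ℤ) : ℝ) = (n : ℝ) := by
        have : ((n : ℤ)) = k := by omega
        exact_mod_cast congrArg (fun t : ℤ => (t : ℝ)) this.symm
      push_cast at h5
      linarith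
    have hfin : K * (1 + c) < (n : ℝ) * M⁻¹ * ε := by
      rw [div_lt_iff₀ hε] at hnlarge
      have h8 : K * (1 + c) * M * M⁻¹ < (n : ℝ) * ε * M⁻¹ :=
        mul_lt_mul_of_pos_right hnlarge (inv_pos.mpr hMpos)
      have h9 : K * (1 + c) * M * M⁻¹ = K * (1 + c) := by field_simp
      rw [h9] at h8
      calc K * (1 + c) < (n : ℝ) * ε * M⁻¹ := h8
        _ = (n : ℝ) * M⁻¹ * ε := by ring
    linarith

end Aux5
/-- If for every bounded sequence `{w_k}` the difference equation `v_{k+1} = A_k v_k + w_k`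
has a bounded solution `{v_k}`, then `B⁺(𝒜) + B⁻(𝒜) = ℝ^m`. -/
theorem transverse_of_bounded_solvability
    {m : ℕ} (A : ℤ → (EuclideanSpace ℝ (Fin m) ≃L[ℝ] EuclideanSpace ℝ (Fin m)))
    (N : ℝ) (hN : 0 < N)
    (hA : ∀ k : ℤ, ‖(A k : EuclideanSpace ℝ (Fin m) →L[ℝ] EuclideanSpace ℝ (Fin m))‖ ≤ N)
    (hAinv : ∀ k : ℤ,
      ‖((A k).symm : EuclideanSpace ℝ (Fin m) →L[ℝ] EuclideanSpace ℝ (Fin m))‖ ≤ N)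
    (hsolv : ∀ w : ℤ → EuclideanSpace ℝ (Fin m), (∃ C : ℝ, ∀ k : ℤ, ‖w k‖ ≤ C) →
      ∃ v : ℤ → EuclideanSpace ℝ (Fin m), (∃ C : ℝ, ∀ k : ℤ, ‖v k‖ ≤ C) ∧
        ∀ k : ℤ, v (k + 1) = A k (v k) + w k) :
    ∀ u : EuclideanSpace ℝ (Fin m), ∃ x ∈ Bplus A, ∃ y ∈ Bminus A, u = x + y := by
  intro u
  obtain ⟨K, hKpos, hsolv1⟩ := uniform_solv A N hN hA hsolv
  obtain ⟨c, hcnn, hbsp⟩ := bs_plus A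
  obtain ⟨c', hcnn', hbsm⟩ := bs_minus A
  set wu : ℤ → EuclideanSpace ℝ (Fin m) := fun j => if j = -1 then u else 0 with hwu
  have hwub : ∃ C : ℝ, ∀ k : ℤ, ‖wu k‖ ≤ C := by
    refine ⟨‖u‖, fun k => ?_⟩
    show ‖if k = -1 then u else 0‖ ≤ ‖u‖
    split_ifs
    · exact le_rfl
    · rw [norm_zero]; exact norm_nonneg u
  obtain ⟨v, ⟨Cv, hCv⟩, hrec⟩ := hsolv wu hwub
  have hvf : ∀ k : ℤ, 0 ≤ k → v k = Phi A k 0 (v 0) := by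
    apply sol_eq_Phi_forward
    intro k hk
    rw [hrec k]
    have e : wu k = 0 := by
      show (if k = -1 then u else 0) = 0
      exact if_neg (by omega)
    rw [e, add_zero]
  have hxV : v 0 ∈ Vplus A := by
    refine ⟨Cv, fun k hk => ?_⟩
    rw [← hvf k hk]
    exact hCv k
  set s : ℤ → EuclideanSpace ℝ (Fin m) := fun k => if 0 ≤ k then Phi A k 0 u else 0 with hs
  set g : ℤ → EuclideanSpace ℝ (Fin m) := fun k => s k - v k with hg
  have hgsucc : ∀ k : ℤ, g (k + 1) = A k (g k) := by
    intro k
    show s (k + 1) - v (k + 1) = A k (s k - v k)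
    rw [map_sub, hrec k]
    by_cases h1 : 0 ≤ k
    · have e1 : s (k + 1) = Phi A (k + 1) 0 u := by
        show (if 0 ≤ k + 1 then Phi A (k + 1) 0 u else 0) = _
        exact if_pos (by omega)
      have e2 : s k = Phi A k 0 u := by
        show (if 0 ≤ k then Phi A k 0 u else 0) = _
        exact if_pos h1
      have e3 : wu k = 0 := by
        show (if k = -1 then u else 0) = 0
        exact if_neg (by omega)
      rw [e1, e2, e3, add_zero, Phi_succ_apply]
    · by_cases h2 : k = -1
      · subst h2
        rw [show (-1 : ℤ) + 1 = 0 from by norm_num]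
        have e1 : s 0 = u := by
          show (if (0 : ℤ) ≤ 0 then Phi A 0 0 u else 0) = u
          rw [if_pos le_rfl, Phi_zero_eq]
          rfl
        have e2 : s (-1) = 0 := by
          show (if (0 : ℤ) ≤ -1 then Phi A (-1) 0 u else 0) = 0
          exact if_neg (by omega)
        have e3 : wu (-1) = u := by
          show (if (-1 : ℤ) = -1 then u else 0) = u
          exact if_pos rfl
        rw [e1, e2, e3, map_zero]
        abel
      · have e1 : s (k + 1) = 0 := by
          show (if 0 ≤ k + 1 then Phi A (k + 1) 0 u else 0) = 0
          exact if_neg (by omega)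
        have e2 : s k = 0 := by
          show (if 0 ≤ k then Phi A k 0 u else 0) = 0
          exact if_neg (by omega)
        have e3 : wu k = 0 := by
          show (if k = -1 then u else 0) = 0
          exact if_neg (by omega)
        rw [e1, e2, e3, map_zero, add_zero]
  have hgPhi := sol_eq_Phi A g hgsucc
  have hg0 : g 0 = u - v 0 := by
    show s 0 - v 0 = u - v 0
    have e1 : s 0 = u := by
      show (if (0 : ℤ) ≤ 0 then Phi A 0 0 u else 0) = u
      rw [if_pos le_rfl, Phi_zero_eq]
      rfl
    rw [e1]
  have hyV : u - v 0 ∈ Vminus A := by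
    refine ⟨max Cv ‖u - v 0‖, fun k hk => ?_⟩
    rw [← hg0, ← hgPhi k]
    by_cases h1 : k = 0
    · subst h1
      rw [hg0]
      exact le_max_right _ _
    · have e2 : s k = 0 := by
        show (if 0 ≤ k then Phi A k 0 u else 0) = 0
        exact if_neg (by omega)
      show ‖s k - v k‖ ≤ _
      rw [e2, zero_sub, norm_neg]
      exact (hCv k).trans (le_max_left _ _)
  exact ⟨v 0, decay_plus A K c hKpos hcnn hsolv1 hbsp (v 0) hxV,
    u - v 0, decay_minus A K c' hKpos hcnn' hsolv1 hbsm (u - v 0) hyV, by abel⟩
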